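/- With P = Σ p_n S_n the Chebyshev–Markov–Stieltjes majorant of 𝟙_{[x_{k₀},∞)}, for each n ≥ 1 one has |p_n| ≤ |∫_{x_{k₀}}^{∞} S_n(x) dσ(x)| + ∫_ℝ R²(x)|S_n(x)| dσ(x), where R(x) = S_{n₀}(x)/(S_{n₀}'(x_{k₀})(x - x_{k₀})). -/

import Mathlib

open MeasureTheory Polynomial

section CMSAux

private lemma cms_lin_coprime {a b : ℝ} (h : a ≠ b) :
    IsCoprime (X - C a : Polynomial ℝ) (X - C b) := by
  have hba : (b - a) ≠ 0 := sub_ne_zero.mpr (Ne.symm h)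
  refine ⟨C (b - a)⁻¹, -C (b - a)⁻¹, ?_⟩
  have h1 : (C (b-a)⁻¹) * (X - C a) + (-C (b-a)⁻¹) * (X - C b)
      = C (b-a)⁻¹ * (C b - C a) := by ring
  rw [h1, ← C_sub, ← C_mul, inv_mul_cancel₀ hba, C_1]

private lemma cms_sq_dvd {p : Polynomial ℝ} {a : ℝ} (h0 : p.eval a = 0)
    (h1 : (derivative p).eval a = 0) : (X - C a) ^ 2 ∣ p := by
  obtain ⟨q, hq⟩ := (dvd_iff_isRoot (p := p) (a := a)).mpr h0
  have hd : derivative p = q + (X - C a) * derivative q := by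
    rw [hq, derivative_mul, derivative_sub, derivative_X, derivative_C, sub_zero, one_mul]
  have hqa : q.eval a = 0 := by
    have h2 := h1
    rw [hd] at h2
    simpa using h2
  obtain ⟨r, hr⟩ := (dvd_iff_isRoot (p := q) (a := a)).mpr hqa
  exact ⟨r, by rw [hq, hr]; ring⟩

set_option maxHeartbeats 1000000 in
/-- The Chebyshev–Markov–Stieltjes majorant property. -/
private theorem cms_majorant (m : ℕ) (y : ℕ → ℝ)
    (hy : ∀ i j, i < j → j < m → y i < y j)
    (k₀ : ℕ) (hk₀ : k₀ < m) (P : Polynomial ℝ)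
    (hdeg : P.natDegree ≤ 2 * m - 2)
    (hval : ∀ k, k < m → P.eval (y k) = if k₀ ≤ k then 1 else 0)
    (hder : ∀ k, k < m → k ≠ k₀ → (derivative P).eval (y k) = 0)
    (t : ℝ) : (if y k₀ ≤ t then (1:ℝ) else 0) ≤ P.eval t := by
  classical
  have hmono : ∀ i j, i ≤ j → j < m → y i ≤ y j := by
    intro i j hij hj
    rcases eq_or_lt_of_le hij with h | h
    · rw [h]
    · exact (hy i j h hj).le
  rcases Nat.eq_zero_or_pos k₀ with hk0 | hk0
  · -- k₀ = 0 : P ≡ 1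
    subst hk0
    have hm1 : 0 < m := hk₀
    have hPone : P = C 1 := by
      by_contra hne
      have hG : P - C 1 ≠ 0 := sub_ne_zero.mpr hne
      have hdvd : ((X - C (y 0)) * ∏ k ∈ Finset.Ico 1 m, (X - C (y k)) ^ 2) ∣ (P - C 1) := by
        apply IsCoprime.mul_dvd
        · apply IsCoprime.prod_right
          intro k hk
          rw [Finset.mem_Ico] at hk
          exact (cms_lin_coprime (ne_of_lt (hy 0 k hk.1 hk.2))).pow_right
        · rw [dvd_iff_isRoot]
          have := hval 0 hm1
          simp only [le_refl, if_true] at this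
          simp [IsRoot, this]
        · apply Finset.prod_dvd_of_coprime
          · intro i hi j hj hij
            rw [Finset.mem_coe, Finset.mem_Ico] at hi hj
            rcases lt_or_gt_of_ne hij with h | h
            · exact ((cms_lin_coprime (ne_of_lt (hy i j h hj.2))).pow_right).pow_left
            · exact (((cms_lin_coprime (ne_of_lt (hy j i h hi.2))).pow_right).pow_left).symm
          · intro k hk
            rw [Finset.mem_Ico] at hk
            apply cms_sq_dvd
            · have := hval k hk.2
              simp only [Nat.zero_le, if_true] at this
              simp [this]
            · rw [derivative_sub, derivative_C, sub_zero]
              exact hder k hk.2 (by omega)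
      have hdgF : ((X - C (y 0)) * ∏ k ∈ Finset.Ico 1 m, (X - C (y k)) ^ 2).natDegree
          = 2 * m - 1 := by
        rw [Monic.natDegree_mul (monic_X_sub_C _)
            (monic_prod_of_monic _ _ (fun k _ => (monic_X_sub_C _).pow _)),
          natDegree_prod_of_monic _ _ (fun k _ => (monic_X_sub_C _).pow _)]
        have : ∀ k ∈ Finset.Ico 1 m, ((X - C (y k)) ^ 2).natDegree = 2 := by
          intro k _
          rw [natDegree_pow, natDegree_X_sub_C]
        rw [Finset.sum_congr rfl this, Finset.sum_const, Nat.card_Ico, smul_eq_mul,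
          natDegree_X_sub_C]
        omega
      have hle := Polynomial.natDegree_le_of_dvd hdvd hG
      rw [hdgF] at hle
      have hG2 : (P - C 1).natDegree ≤ 2 * m - 2 := by
        refine le_trans (natDegree_sub_le _ _) ?_
        simp only [natDegree_C, sup_le_iff]
        exact ⟨hdeg, by omega⟩
      omega
    rw [hPone, eval_C]
    split_ifs <;> norm_num
  -- main case : 1 ≤ k₀ < m
  have hm2 : 2 ≤ m := by omega
  set P' := derivative P with hP'def
  have hP'ne : P' ≠ 0 := by
    intro h
    obtain ⟨c, hc⟩ := natDegree_eq_zero.mp (natDegree_eq_zero_of_derivative_eq_zero h)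
    have h0 := hval 0 (by omega)
    have h1 := hval k₀ hk₀
    rw [← hc, eval_C] at h0 h1
    rw [if_neg (by omega : ¬ k₀ ≤ 0)] at h0
    rw [if_pos le_rfl] at h1
    rw [h0] at h1
    norm_num at h1
  set J : Finset ℕ := (Finset.range (m-1)).erase (k₀ - 1) with hJdef
  have hJmem : ∀ j, j ∈ J ↔ (j ≠ k₀ - 1 ∧ j < m - 1) := by
    intro j
    rw [hJdef, Finset.mem_erase, Finset.mem_range]
  -- Rolle points
  have hxi : ∀ j : ℕ, ∃ c : ℝ, j ∈ J →
      (y j < c ∧ c < y (j+1) ∧ P'.eval c = 0) := by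
    intro j
    by_cases hj : j ∈ J
    · obtain ⟨hjne, hjm⟩ := (hJmem j).mp hj
      have hlt : y j < y (j+1) := hy j (j+1) (Nat.lt_succ_self j) (by omega)
      have heq : P.eval (y j) = P.eval (y (j+1)) := by
        rw [hval j (by omega), hval (j+1) (by omega)]
        by_cases h : k₀ ≤ j
        · rw [if_pos h, if_pos (by omega)]
        · rw [if_neg h, if_neg (by omega)]
      obtain ⟨c, hc, hc0⟩ := exists_deriv_eq_zero hlt
        ((Polynomial.continuous P).continuousOn) heq
      refine ⟨c, fun _ => ⟨hc.1, hc.2, ?_⟩⟩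
      rw [hP'def, ← Polynomial.deriv]
      exact hc0
    · exact ⟨0, fun h => absurd h hj⟩
  choose ξ hξ using hxi
  -- basic per-index facts
  have hJfact : ∀ j ∈ J, y j < ξ j ∧ ξ j < y (j+1) ∧ j + 1 < m ∧ j + 1 ≠ k₀ := by
    intro j hj
    obtain ⟨hjne, hjm⟩ := (hJmem j).mp hj
    obtain ⟨h1, h2, _⟩ := hξ j hj
    exact ⟨h1, h2, by omega, by omega⟩
  -- the factor polynomial
  set F : Polynomial ℝ := (X - C (y 0)) *
      ∏ j ∈ J, ((X - C (ξ j)) * (X - C (y (j+1)))) with hFdef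
  have hpairmono : ∀ j j', j ∈ J → j' ∈ J → j < j' →
      ξ j < y (j+1) ∧ y (j+1) ≤ y j' ∧ y j' < ξ j' := by
    intro j j' hj hj' hlt
    obtain ⟨_, h2, h3, _⟩ := hJfact j hj
    obtain ⟨h1', _, h3', _⟩ := hJfact j' hj'
    exact ⟨h2, hmono (j+1) j' (by omega) (by omega), h1'⟩
  have hFdvd : F ∣ P' := by
    have hpair_dvd : ∀ j ∈ J, ((X - C (ξ j)) * (X - C (y (j+1)))) ∣ P' := by
      intro j hj
      obtain ⟨h1, h2, h3, h4⟩ := hJfact j hj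
      refine (cms_lin_coprime (ne_of_lt h2)).mul_dvd ?_ ?_
      · exact dvd_iff_isRoot.mpr (hξ j hj).2.2
      · exact dvd_iff_isRoot.mpr (hder (j+1) h3 h4)
    have hpairwise : (↑J : Set ℕ).Pairwise
        (Function.onFun IsCoprime fun j => (X - C (ξ j)) * (X - C (y (j+1)))) := by
      intro j hj j' hj' hne
      rw [Finset.mem_coe] at hj hj'
      have key : ∀ a b, a ∈ J → b ∈ J → a < b →
          IsCoprime ((X - C (ξ a)) * (X - C (y (a+1))))
            ((X - C (ξ b)) * (X - C (y (b+1)))) := by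
        intro a b ha hb hab
        obtain ⟨q1, q2, q3⟩ := hpairmono a b ha hb hab
        obtain ⟨r1, r2, r3, _⟩ := hJfact b hb
        have c1 : IsCoprime (X - C (ξ a)) (X - C (ξ b) : Polynomial ℝ) :=
          cms_lin_coprime (by linarith)
        have c2 : IsCoprime (X - C (ξ a)) (X - C (y (b+1)) : Polynomial ℝ) :=
          cms_lin_coprime (by linarith)
        have c3 : IsCoprime (X - C (y (a+1))) (X - C (ξ b) : Polynomial ℝ) :=
          cms_lin_coprime (by linarith)
        have c4 : IsCoprime (X - C (y (a+1))) (X - C (y (b+1)) : Polynomial ℝ) :=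
          cms_lin_coprime (by linarith)
        exact (c1.mul_right c2).mul_left (c3.mul_right c4)
      rcases lt_or_gt_of_ne hne with h | h
      · exact key j j' hj hj' h
      · exact (key j' j hj' hj h).symm
    have hl : IsCoprime (X - C (y 0))
        (∏ j ∈ J, ((X - C (ξ j)) * (X - C (y (j+1))))) := by
      apply IsCoprime.prod_right
      intro j hj
      obtain ⟨h1, h2, h3, _⟩ := hJfact j hj
      have hy0j : y 0 ≤ y j := hmono 0 j (Nat.zero_le _) (by omega)
      have d1 : IsCoprime (X - C (y 0)) (X - C (ξ j) : Polynomial ℝ) :=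
        cms_lin_coprime (by linarith)
      have d2 : IsCoprime (X - C (y 0)) (X - C (y (j+1)) : Polynomial ℝ) :=
        cms_lin_coprime (ne_of_lt (by linarith))
      exact d1.mul_right d2
    refine hl.mul_dvd (dvd_iff_isRoot.mpr (hder 0 (by omega) (by omega))) ?_
    exact Finset.prod_dvd_of_coprime hpairwise hpair_dvd
  have hFmonic : F.Monic := by
    exact (monic_X_sub_C _).mul (monic_prod_of_monic _ _
      (fun j _ => (monic_X_sub_C _).mul (monic_X_sub_C _)))
  have hJcard : J.card = m - 2 := by
    rw [hJdef, Finset.card_erase_of_mem (Finset.mem_range.mpr (by omega)),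
      Finset.card_range]
    omega
  have hFdeg : F.natDegree = 2 * m - 3 := by
    rw [hFdef, Monic.natDegree_mul (monic_X_sub_C _)
        (monic_prod_of_monic _ _ (fun j _ => (monic_X_sub_C _).mul (monic_X_sub_C _))),
      natDegree_prod_of_monic _ _ (fun j _ => (monic_X_sub_C _).mul (monic_X_sub_C _)),
      natDegree_X_sub_C]
    have : ∀ j ∈ J, ((X - C (ξ j)) * (X - C (y (j+1)))).natDegree = 2 := by
      intro j _
      rw [Monic.natDegree_mul (monic_X_sub_C _) (monic_X_sub_C _),
        natDegree_X_sub_C, natDegree_X_sub_C]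
    rw [Finset.sum_congr rfl this, Finset.sum_const, hJcard, smul_eq_mul]
    omega
  have hP'deg : P'.natDegree ≤ 2 * m - 3 := by
    have h2 : P'.natDegree ≤ P.natDegree - 1 := Polynomial.natDegree_derivative_le P
    omega
  obtain ⟨q, hq⟩ := hFdvd
  have hqne : q ≠ 0 := by
    intro h
    rw [h, mul_zero] at hq
    exact hP'ne hq
  have hqdeg : q.natDegree = 0 := by
    have := Polynomial.natDegree_mul hFmonic.ne_zero hqne
    rw [← hq] at this
    omega
  obtain ⟨lc, hlc⟩ := natDegree_eq_zero.mp hqdeg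
  have hlcne : lc ≠ 0 := by
    intro h
    rw [h, map_zero] at hlc
    exact hqne hlc.symm
  have heval : ∀ τ : ℝ, P'.eval τ =
      (τ - y 0) * (∏ j ∈ J, ((τ - ξ j) * (τ - y (j+1)))) * lc := by
    intro τ
    rw [hq, ← hlc, hFdef]
    simp [eval_prod]
  -- sign of lc via MVT in the central gap
  have hcentj : ∀ τ : ℝ, y (k₀ - 1) < τ → τ < y k₀ →
      ∀ j ∈ J, (τ ≤ ξ j ∨ y (j+1) ≤ τ) := by
    intro τ hτ1 hτ2 j hj
    obtain ⟨h1, h2, h3, h4⟩ := hJfact j hj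
    obtain ⟨hjne, hjm⟩ := (hJmem j).mp hj
    rcases lt_or_gt_of_ne hjne with h | h
    · -- j < k₀ - 1, so j+1 ≤ k₀ - 1
      right
      exact le_trans (hmono (j+1) (k₀-1) (by omega) (by omega)) hτ1.le
    · -- j > k₀ - 1, so j ≥ k₀
      left
      have : y k₀ ≤ y j := hmono k₀ j (by omega) (by omega)
      linarith
  have hlcpos : 0 < lc := by
    have hcent : y (k₀ - 1) < y k₀ := hy _ _ (by omega) hk₀
    obtain ⟨η, hη, hηeq⟩ := exists_deriv_eq_slope (fun x => P.eval x) hcent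
      ((Polynomial.continuous P).continuousOn)
      ((Polynomial.differentiable P).differentiableOn)
    have hηval : P'.eval η = 1 / (y k₀ - y (k₀ - 1)) := by
      rw [hP'def, ← Polynomial.deriv, hηeq, hval k₀ hk₀, hval (k₀-1) (by omega),
        if_pos le_rfl, if_neg (by omega)]
      norm_num
    have hηpos : 0 < P'.eval η := by
      rw [hηval]
      have h3 : 0 < y k₀ - y (k₀ - 1) := sub_pos.mpr hcent
      positivity
    have hbase : 0 < η - y 0 := by
      have : y 0 ≤ y (k₀ - 1) := hmono 0 (k₀-1) (Nat.zero_le _) (by omega)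
      have := hη.1
      linarith
    have hprod : 0 < ∏ j ∈ J, ((η - ξ j) * (η - y (j+1))) := by
      apply Finset.prod_pos
      intro j hj
      obtain ⟨h1, h2, h3, h4⟩ := hJfact j hj
      rcases hcentj η hη.1 hη.2 j hj with h | h
      · rcases eq_or_lt_of_le h with he | hlt
        · -- η = ξ j impossible: need strict; handle by showing η < ξ j
          exfalso
          -- η < y k₀ ≤ ... : in this branch j ≥ k₀ so y j ≥ y k₀ > η so η < ξ j strict anyway
          -- just fall through: we redo the case analysis below
          obtain ⟨hjne, hjm⟩ := (hJmem j).mp hj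
          rcases lt_or_gt_of_ne hjne with hcase | hcase
          · -- j + 1 ≤ k₀ - 1 : then ξ j < y (j+1) ≤ y (k₀ -1) < η contradicting η ≤ ξ j
            have : y (j+1) ≤ y (k₀ - 1) := hmono (j+1) (k₀-1) (by omega) (by omega)
            have := hη.1
            linarith
          · -- j ≥ k₀ : then y k₀ ≤ y j < ξ j and η < y k₀ so η < ξ j ≠ contradiction with he
            have : y k₀ ≤ y j := hmono k₀ j (by omega) (by omega)
            have := hη.2
            linarith
        · -- η < ξ j : also η < y (j+1)? In this case j ≥ k₀ (else right branch chosen)...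
          obtain ⟨hjne, hjm⟩ := (hJmem j).mp hj
          rcases lt_or_gt_of_ne hjne with hcase | hcase
          · have hy1 : y (j+1) ≤ y (k₀ - 1) := hmono (j+1) (k₀-1) (by omega) (by omega)
            have hh := hη.1
            have f1 : 0 < η - ξ j := by linarith
            have f2 : 0 < η - y (j+1) := by linarith
            exact mul_pos f1 f2
          · have hyj : y k₀ ≤ y j := hmono k₀ j (by omega) (by omega)
            have hyj1 : y k₀ ≤ y (j+1) := hmono k₀ (j+1) (by omega) (by omega)
            have := hη.2
            have f1 : η - ξ j < 0 := by linarith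
            have f2 : η - y (j+1) < 0 := by linarith
            exact mul_pos_of_neg_of_neg f1 f2
      · -- y (j+1) ≤ η : then also ξ j < η
        have f1 : 0 < η - ξ j := by linarith
        have f2 : 0 ≤ η - y (j+1) := by linarith
        rcases eq_or_lt_of_le f2 with he | hlt
        · exfalso
          obtain ⟨hjne, hjm⟩ := (hJmem j).mp hj
          rcases lt_or_gt_of_ne hjne with hcase | hcase
          · have : y (j+1) ≤ y (k₀ - 1) := hmono (j+1) (k₀-1) (by omega) (by omega)
            have := hη.1
            linarith
          · have : y k₀ ≤ y (j+1) := hmono k₀ (j+1) (by omega) (by omega)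
            have := hη.2
            linarith
        · exact mul_pos f1 hlt
    have := heval η
    rw [this] at hηpos
    by_contra hle
    push_neg at hle
    have : (η - y 0) * (∏ j ∈ J, ((η - ξ j) * (η - y (j+1)))) * lc ≤ 0 :=
      mul_nonpos_of_nonneg_of_nonpos (le_of_lt (mul_pos hbase hprod)) hle
    linarith
  -- nonneg sign lemma
  have SGNpos : ∀ τ : ℝ, y 0 ≤ τ → (∀ j ∈ J, τ ≤ ξ j ∨ y (j+1) ≤ τ) →
      0 ≤ P'.eval τ := by
    intro τ h0 hp
    rw [heval τ]
    refine mul_nonneg (mul_nonneg (by linarith) (Finset.prod_nonneg ?_)) hlcpos.le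
    intro j hj
    obtain ⟨h1, h2, h3, h4⟩ := hJfact j hj
    rcases hp j hj with h | h
    · have f1 : τ - ξ j ≤ 0 := by linarith
      have f2 : τ - y (j+1) ≤ 0 := by linarith
      have h5 := mul_nonneg (neg_nonneg.2 f1) (neg_nonneg.2 f2)
      rw [neg_mul_neg] at h5
      exact h5
    · have f1 : 0 ≤ τ - ξ j := by linarith
      have f2 : 0 ≤ τ - y (j+1) := by linarith
      exact mul_nonneg f1 f2
  have SGNneg : ∀ (τ : ℝ) (k : ℕ), k ∈ J → ξ k ≤ τ → τ ≤ y (k+1) →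
      (∀ j ∈ J, j ≠ k → τ ≤ ξ j ∨ y (j+1) ≤ τ) → P'.eval τ ≤ 0 := by
    intro τ k hk hτ1 hτ2 hp
    rw [heval τ]
    obtain ⟨g1, g2, g3, g4⟩ := hJfact k hk
    have hbase : 0 ≤ τ - y 0 := by
      have : y 0 ≤ y k := hmono 0 k (Nat.zero_le _) (by omega)
      linarith
    have hprod : (∏ j ∈ J, ((τ - ξ j) * (τ - y (j+1)))) ≤ 0 := by
      rw [← Finset.mul_prod_erase J _ hk]
      have hk0 : (τ - ξ k) * (τ - y (k+1)) ≤ 0 :=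
        mul_nonpos_of_nonneg_of_nonpos (by linarith) (by linarith)
      have hrest : 0 ≤ ∏ j ∈ J.erase k, ((τ - ξ j) * (τ - y (j+1))) := by
        apply Finset.prod_nonneg
        intro j hj
        have hjJ : j ∈ J := Finset.mem_of_mem_erase hj
        have hjk : j ≠ k := Finset.ne_of_mem_erase hj
        obtain ⟨h1, h2, h3, h4⟩ := hJfact j hjJ
        rcases hp j hjJ hjk with h | h
        · have f1 : τ - ξ j ≤ 0 := by linarith
          have f2 : τ - y (j+1) ≤ 0 := by linarith
          have h5 := mul_nonneg (neg_nonneg.2 f1) (neg_nonneg.2 f2)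
          rw [neg_mul_neg] at h5
          exact h5
        · exact mul_nonneg (by linarith) (by linarith)
      exact mul_nonpos_of_nonpos_of_nonneg hk0 hrest
    have := mul_nonpos_of_nonneg_of_nonpos hbase hprod
    exact mul_nonpos_of_nonpos_of_nonneg this hlcpos.le
  -- monotonicity helpers
  have monoIcc : ∀ a b : ℝ, a ≤ b →
      (∀ τ, a < τ → τ < b → 0 ≤ P'.eval τ) →
      ∀ t', a ≤ t' → t' ≤ b → P.eval a ≤ P.eval t' := by
    intro a b hab hsgn t' h1 h2
    have hm := monotoneOn_of_deriv_nonneg (convex_Icc a b)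
      ((Polynomial.continuous P).continuousOn)
      (fun x _ => ((Polynomial.differentiable P) x).differentiableWithinAt)
      (fun x hx => by
        rw [interior_Icc] at hx
        rw [Polynomial.deriv]
        exact hsgn x hx.1 hx.2)
    exact hm (Set.left_mem_Icc.mpr hab) ⟨h1, h2⟩ h1
  have antiIcc : ∀ a b : ℝ, a ≤ b →
      (∀ τ, a < τ → τ < b → P'.eval τ ≤ 0) →
      ∀ t', a ≤ t' → t' ≤ b → P.eval b ≤ P.eval t' := by
    intro a b hab hsgn t' h1 h2
    have hm := antitoneOn_of_deriv_nonpos (convex_Icc a b)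
      ((Polynomial.continuous P).continuousOn)
      (fun x _ => ((Polynomial.differentiable P) x).differentiableWithinAt)
      (fun x hx => by
        rw [interior_Icc] at hx
        rw [Polynomial.deriv]
        exact hsgn x hx.1 hx.2)
    exact hm ⟨h1, h2⟩ (Set.right_mem_Icc.mpr hab) h2
  have monoIci : ∀ a : ℝ, (∀ τ, a < τ → 0 ≤ P'.eval τ) →
      ∀ t', a ≤ t' → P.eval a ≤ P.eval t' := by
    intro a hsgn t' h1
    have hm := monotoneOn_of_deriv_nonneg (convex_Ici a)
      ((Polynomial.continuous P).continuousOn)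
      (fun x _ => ((Polynomial.differentiable P) x).differentiableWithinAt)
      (fun x hx => by
        rw [interior_Ici] at hx
        rw [Polynomial.deriv]
        exact hsgn x hx)
    exact hm (Set.self_mem_Ici) h1 h1
  have antiIic : ∀ b : ℝ, (∀ τ, τ < b → P'.eval τ ≤ 0) →
      ∀ t', t' ≤ b → P.eval b ≤ P.eval t' := by
    intro b hsgn t' h1
    have hm := antitoneOn_of_deriv_nonpos (convex_Iic b)
      ((Polynomial.continuous P).continuousOn)
      (fun x _ => ((Polynomial.differentiable P) x).differentiableWithinAt)
      (fun x hx => by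
        rw [interior_Iic] at hx
        rw [Polynomial.deriv]
        exact hsgn x hx)
    exact hm h1 (Set.self_mem_Iic) h1
  -- gap analyses
  have GAPR : ∀ k, k₀ ≤ k → k + 1 < m → ∀ t', y k ≤ t' → t' ≤ y (k+1) →
      1 ≤ P.eval t' := by
    intro k hk hkm t' h1 h2
    have hkJ : k ∈ J := (hJmem k).mpr ⟨by omega, by omega⟩
    obtain ⟨g1, g2, g3, g4⟩ := hJfact k hkJ
    have hyk : P.eval (y k) = 1 := by rw [hval k (by omega), if_pos hk]
    have hyk1 : P.eval (y (k+1)) = 1 := by rw [hval (k+1) (by omega), if_pos (by omega)]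
    have hcond : ∀ τ, y k < τ → τ < ξ k → ∀ j ∈ J, τ ≤ ξ j ∨ y (j+1) ≤ τ := by
      intro τ hτ1 hτ2 j hj
      obtain ⟨f1, f2, f3, f4⟩ := hJfact j hj
      rcases lt_trichotomy j k with h | h | h
      · right
        exact le_trans (hmono (j+1) k (by omega) (by omega)) hτ1.le
      · left; rw [h]; exact hτ2.le
      · left
        have : y (k+1) ≤ y j := hmono (k+1) j (by omega) (by omega)
        linarith
    have hcond2 : ∀ τ, ξ k < τ → τ < y (k+1) → ∀ j ∈ J, j ≠ k →
        τ ≤ ξ j ∨ y (j+1) ≤ τ := by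
      intro τ hτ1 hτ2 j hj hjk
      obtain ⟨f1, f2, f3, f4⟩ := hJfact j hj
      rcases lt_or_gt_of_ne hjk with h | h
      · right
        exact le_trans (hmono (j+1) k (by omega) (by omega)) (by linarith)
      · left
        have : y (k+1) ≤ y j := hmono (k+1) j (by omega) (by omega)
        linarith
    rcases le_total t' (ξ k) with hc | hc
    · have := monoIcc (y k) (ξ k) g1.le
        (fun τ hτ1 hτ2 => SGNpos τ
          (le_trans (hmono 0 k (Nat.zero_le _) (by omega)) hτ1.le)
          (hcond τ hτ1 hτ2)) t' h1 hc
      rw [hyk] at this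
      exact this
    · have := antiIcc (ξ k) (y (k+1)) g2.le
        (fun τ hτ1 hτ2 => SGNneg τ k hkJ hτ1.le hτ2.le (hcond2 τ hτ1 hτ2)) t' hc h2
      rw [hyk1] at this
      exact this
  have TAILR : ∀ t', y (m-1) ≤ t' → 1 ≤ P.eval t' := by
    intro t' h1
    have hv : P.eval (y (m-1)) = 1 := by
      rw [hval (m-1) (by omega), if_pos (by omega)]
    have := monoIci (y (m-1))
      (fun τ hτ => SGNpos τ (le_trans (hmono 0 (m-1) (Nat.zero_le _) (by omega)) hτ.le)
        (fun j hj => by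
          obtain ⟨f1, f2, f3, f4⟩ := hJfact j hj
          right
          exact le_trans (hmono (j+1) (m-1) (by omega) (by omega)) hτ.le)) t' h1
    rw [hv] at this
    exact this
  have CENT : ∀ t', y (k₀ - 1) ≤ t' → t' ≤ y k₀ → 0 ≤ P.eval t' := by
    intro t' h1 h2
    have hv : P.eval (y (k₀-1)) = 0 := by
      rw [hval (k₀-1) (by omega), if_neg (by omega)]
    have := monoIcc (y (k₀-1)) (y k₀) (hy _ _ (by omega) hk₀).le
      (fun τ hτ1 hτ2 => SGNpos τ
        (le_trans (hmono 0 (k₀-1) (Nat.zero_le _) (by omega)) hτ1.le)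
        (hcentj τ hτ1 hτ2)) t' h1 h2
    rw [hv] at this
    exact this
  have GAPL : ∀ k, k + 1 ≤ k₀ - 1 → ∀ t', y k ≤ t' → t' ≤ y (k+1) →
      0 ≤ P.eval t' := by
    intro k hk t' h1 h2
    have hkJ : k ∈ J := (hJmem k).mpr ⟨by omega, by omega⟩
    obtain ⟨g1, g2, g3, g4⟩ := hJfact k hkJ
    have hyk : P.eval (y k) = 0 := by rw [hval k (by omega), if_neg (by omega)]
    have hyk1 : P.eval (y (k+1)) = 0 := by
      rw [hval (k+1) (by omega), if_neg (by omega)]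
    have hcond : ∀ τ, y k < τ → τ < ξ k → ∀ j ∈ J, τ ≤ ξ j ∨ y (j+1) ≤ τ := by
      intro τ hτ1 hτ2 j hj
      obtain ⟨f1, f2, f3, f4⟩ := hJfact j hj
      rcases lt_trichotomy j k with h | h | h
      · right
        exact le_trans (hmono (j+1) k (by omega) (by omega)) hτ1.le
      · left; rw [h]; exact hτ2.le
      · left
        have : y (k+1) ≤ y j := hmono (k+1) j (by omega) (by omega)
        linarith
    have hcond2 : ∀ τ, ξ k < τ → τ < y (k+1) → ∀ j ∈ J, j ≠ k →
        τ ≤ ξ j ∨ y (j+1) ≤ τ := by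
      intro τ hτ1 hτ2 j hj hjk
      obtain ⟨f1, f2, f3, f4⟩ := hJfact j hj
      rcases lt_or_gt_of_ne hjk with h | h
      · right
        exact le_trans (hmono (j+1) k (by omega) (by omega)) (by linarith)
      · left
        have : y (k+1) ≤ y j := hmono (k+1) j (by omega) (by omega)
        linarith
    rcases le_total t' (ξ k) with hc | hc
    · have := monoIcc (y k) (ξ k) g1.le
        (fun τ hτ1 hτ2 => SGNpos τ
          (le_trans (hmono 0 k (Nat.zero_le _) (by omega)) hτ1.le)
          (hcond τ hτ1 hτ2)) t' h1 hc
      rw [hyk] at this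
      exact this
    · have := antiIcc (ξ k) (y (k+1)) g2.le
        (fun τ hτ1 hτ2 => SGNneg τ k hkJ hτ1.le hτ2.le (hcond2 τ hτ1 hτ2)) t' hc h2
      rw [hyk1] at this
      exact this
  have TAILL : ∀ t', t' ≤ y 0 → 0 ≤ P.eval t' := by
    intro t' h1
    have hv : P.eval (y 0) = 0 := by rw [hval 0 (by omega), if_neg (by omega)]
    have hsgn : ∀ τ, τ < y 0 → P'.eval τ ≤ 0 := by
      intro τ hτ
      rw [heval τ]
      have hbase : τ - y 0 ≤ 0 := by linarith
      have hprod : 0 ≤ ∏ j ∈ J, ((τ - ξ j) * (τ - y (j+1))) := by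
        apply Finset.prod_nonneg
        intro j hj
        obtain ⟨f1, f2, f3, f4⟩ := hJfact j hj
        have e1 : y 0 ≤ y j := hmono 0 j (Nat.zero_le _) (by omega)
        have e2 : y 0 ≤ y (j+1) := hmono 0 (j+1) (Nat.zero_le _) (by omega)
        have g1 : τ - ξ j ≤ 0 := by linarith
        have g2 : τ - y (j+1) ≤ 0 := by linarith
        have h5 := mul_nonneg (neg_nonneg.2 g1) (neg_nonneg.2 g2)
        rw [neg_mul_neg] at h5
        exact h5
      exact mul_nonpos_of_nonpos_of_nonneg
        (mul_nonpos_of_nonpos_of_nonneg hbase hprod) hlcpos.le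
    have := antiIic (y 0) hsgn t' h1
    rw [hv] at this
    exact this
  -- assembly
  have RIGHT : ∀ i j, m - 1 - j = i → j < m → k₀ ≤ j →
      ∀ t', y j ≤ t' → 1 ≤ P.eval t' := by
    intro i
    induction i with
    | zero =>
      intro j hji hjm hj t' ht
      have hjeq : j = m - 1 := by omega
      subst hjeq
      exact TAILR t' ht
    | succ i ih =>
      intro j hji hjm hj t' ht
      have hj1m : j + 1 < m := by omega
      rcases le_total t' (y (j+1)) with hc | hc
      · exact GAPR j hj hj1m t' ht hc
      · exact ih (j+1) (by omega) hj1m (by omega) t' hc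
  have LEFT : ∀ j, j + 1 ≤ k₀ → ∀ t', t' ≤ y j → 0 ≤ P.eval t' := by
    intro j
    induction j with
    | zero => intro _ t' ht; exact TAILL t' ht
    | succ j ih =>
      intro hjk t' ht
      rcases le_total t' (y j) with hc | hc
      · exact ih (by omega) t' hc
      · exact GAPL j (by omega) t' hc ht
  split_ifs with hts
  · exact RIGHT (m - 1 - k₀) k₀ rfl hk₀ le_rfl t hts
  · push_neg at hts
    rcases le_total t (y (k₀ - 1)) with hc | hc
    · exact LEFT (k₀ - 1) (by omega) t hc
    · exact CENT t hc hts.le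

private lemma cms_integrable_polyeval (σ : Measure ℝ)
    (hmom : ∀ k : ℕ, Integrable (fun t => t ^ k) σ) (Q : Polynomial ℝ) :
    Integrable (fun t => Q.eval t) σ := by
  have h : (fun t : ℝ => Q.eval t)
      = fun t => ∑ i ∈ Finset.range (Q.natDegree + 1), Q.coeff i * t ^ i := by
    funext t
    exact Q.eval_eq_sum_range t
  rw [h]
  exact integrable_finset_sum _ (fun i _ => (hmom i).const_mul _)

end CMSAux

section CMSKey

open Polynomial

set_option maxHeartbeats 1000000 in
private lemma cms_key
    (n₀ : ℕ) (hn₀ : 1 ≤ n₀) (x : Fin n₀ → ℝ) (hx : StrictMono x) (k₀ : Fin n₀)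
    (P R : Polynomial ℝ)
    (hPdeg : P.degree ≤ (2 * n₀ - 2 : ℕ))
    (hPval : ∀ k, P.eval (x k) = if k₀ ≤ k then 1 else 0)
    (hPder : ∀ k, k ≠ k₀ → (Polynomial.derivative P).eval (x k) = 0)
    (hRdeg : R.degree ≤ (n₀ - 1 : ℕ))
    (hRval : ∀ k, R.eval (x k) = if k = k₀ then 1 else 0) :
    ∀ t : ℝ, 0 ≤ P.eval t - (if x k₀ ≤ t then 1 else 0) ∧
      P.eval t - (if x k₀ ≤ t then 1 else 0) ≤ (R.eval t)^2 := by
  classical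
  set y : ℕ → ℝ := fun k => x ⟨min k (n₀ - 1), by omega⟩ with hydef
  have hyx : ∀ (k : ℕ) (h : k < n₀), y k = x ⟨k, h⟩ := by
    intro k h
    have hmink : min k (n₀ - 1) = k := by omega
    simp only [hydef]
    congr 1
    exact Fin.ext (by simpa using hmink)
  have hy : ∀ i j, i < j → j < n₀ → y i < y j := by
    intro i j hij hj
    rw [hyx i (by omega), hyx j hj]
    exact hx (by simpa [Fin.lt_def] using hij)
  have hvaly : ∀ k, k < n₀ → P.eval (y k) = if (k₀ : ℕ) ≤ k then 1 else 0 := by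
    intro k h
    rw [hyx k h, hPval ⟨k, h⟩]
    simp [Fin.le_def]
  have hdery : ∀ k, k < n₀ → k ≠ (k₀ : ℕ) → (derivative P).eval (y k) = 0 := by
    intro k h hk
    rw [hyx k h]
    exact hPder ⟨k, h⟩ (by simp [Fin.ext_iff]; omega)
  have hdegP : P.natDegree ≤ 2 * n₀ - 2 := natDegree_le_iff_degree_le.mpr hPdeg
  have lower := cms_majorant n₀ y hy (k₀ : ℕ) k₀.isLt P hdegP hvaly hdery
  have hyk₀ : y (k₀ : ℕ) = x k₀ := by
    rw [hyx (k₀ : ℕ) k₀.isLt]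
  -- the minorant Q = P - R²
  set Q : Polynomial ℝ := P - R ^ 2 with hQdef
  have hQval : ∀ k : Fin n₀, Q.eval (x k) = if k₀ < k then 1 else 0 := by
    intro k
    rw [hQdef, eval_sub, eval_pow, hPval k, hRval k]
    by_cases h : k = k₀
    · subst h
      simp
    · rw [if_neg h]
      by_cases h2 : k₀ ≤ k
      · rw [if_pos h2, if_pos (lt_of_le_of_ne h2 (Ne.symm h))]
        norm_num
      · rw [if_neg h2, if_neg (fun hc => h2 (le_of_lt hc))]
        norm_num
  have hQder : ∀ k : Fin n₀, k ≠ k₀ → (derivative Q).eval (x k) = 0 := by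
    intro k hk
    rw [hQdef, derivative_sub, eval_sub, hPder k hk, derivative_pow, eval_mul, eval_mul,
      eval_C]
    have : R.eval (x k) = 0 := by rw [hRval k, if_neg hk]
    simp [this]
  -- reflected system
  set yr : ℕ → ℝ := fun j => -y (n₀ - 1 - j) with hyrdef
  set Pr : Polynomial ℝ := Polynomial.C 1 - Q.comp (-X) with hPrdef
  have hyr : ∀ i j, i < j → j < n₀ → yr i < yr j := by
    intro i j hij hj
    have : y (n₀ - 1 - j) < y (n₀ - 1 - i) := hy _ _ (by omega) (by omega)
    simp only [hyrdef]
    linarith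
  have hPreval : ∀ s : ℝ, Pr.eval s = 1 - Q.eval (-s) := by
    intro s
    rw [hPrdef, eval_sub, eval_C, eval_comp]
    simp
  have hdegQ : Q.natDegree ≤ 2 * n₀ - 2 := by
    rw [hQdef]
    refine le_trans (natDegree_sub_le _ _) ?_
    have h1 : (R ^ 2).natDegree = 2 * R.natDegree := by
      rw [natDegree_pow]
    have h2 : R.natDegree ≤ n₀ - 1 := natDegree_le_iff_degree_le.mpr hRdeg
    simp only [sup_le_iff]
    constructor
    · exact hdegP
    · omega
  have hdegPr : Pr.natDegree ≤ 2 * n₀ - 2 := by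
    rw [hPrdef]
    refine le_trans (natDegree_sub_le _ _) ?_
    have h1 : (Q.comp (-X)).natDegree = Q.natDegree := by
      rw [natDegree_comp]
      have : (-X : Polynomial ℝ).natDegree = 1 := by
        rw [natDegree_neg, natDegree_X]
      rw [this, mul_one]
    simp only [natDegree_C, sup_le_iff]
    exact ⟨by omega, by rw [h1]; exact hdegQ⟩
  have hvalPr : ∀ j, j < n₀ → Pr.eval (yr j) = if n₀ - 1 - (k₀ : ℕ) ≤ j then 1 else 0 := by
    intro j hj
    have hj2 : n₀ - 1 - j < n₀ := by omega
    rw [hPreval (yr j)]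
    have : -yr j = y (n₀ - 1 - j) := by simp [hyrdef]
    rw [this, hyx _ hj2, hQval ⟨n₀ - 1 - j, hj2⟩]
    have hk₀lt := k₀.isLt
    by_cases h : (k₀ : ℕ) < n₀ - 1 - j
    · rw [if_pos (by simpa [Fin.lt_def] using h), if_neg (by omega)]
      norm_num
    · rw [if_neg (by simpa [Fin.lt_def] using h), if_pos (by omega)]
      norm_num
  have hderPr : ∀ j, j < n₀ → j ≠ n₀ - 1 - (k₀ : ℕ) →
      (derivative Pr).eval (yr j) = 0 := by
    intro j hj hjne
    have hj2 : n₀ - 1 - j < n₀ := by omega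
    have hd : derivative Pr = (derivative Q).comp (-X) := by
      rw [hPrdef, derivative_sub, derivative_C, derivative_comp]
      have : derivative (-X : Polynomial ℝ) = -1 := by
        rw [derivative_neg, derivative_X]
      rw [this]
      ring
    rw [hd, eval_comp]
    have h1 : Polynomial.eval (yr j) (-X : Polynomial ℝ) = y (n₀ - 1 - j) := by
      simp [hyrdef]
    rw [h1, hyx _ hj2]
    refine hQder ⟨n₀ - 1 - j, hj2⟩ ?_
    have hk₀lt := k₀.isLt
    simp [Fin.ext_iff]
    omega
  have upper := cms_majorant n₀ yr hyr (n₀ - 1 - (k₀ : ℕ)) (by omega) Pr hdegPr hvalPr hderPr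
  have hyrk : yr (n₀ - 1 - (k₀ : ℕ)) = -(x k₀) := by
    have hk₀lt := k₀.isLt
    have : n₀ - 1 - (n₀ - 1 - (k₀ : ℕ)) = (k₀ : ℕ) := by omega
    simp only [hyrdef, this, hyk₀]
  -- Q bounds
  have hQle1 : ∀ t : ℝ, Q.eval t ≤ 1 := by
    intro t
    have := upper (-t)
    rw [hPreval (-t), neg_neg] at this
    split_ifs at this <;> linarith
  have hQle0 : ∀ t : ℝ, t ≤ x k₀ → Q.eval t ≤ 0 := by
    intro t ht
    have := upper (-t)
    rw [hPreval (-t), neg_neg, hyrk, if_pos (by linarith)] at this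
    linarith
  -- conclude
  intro t
  have hlow := lower t
  rw [hyk₀] at hlow
  have hQt : Q.eval t = P.eval t - (R.eval t)^2 := by
    rw [hQdef, eval_sub, eval_pow]
  constructor
  · linarith [hlow]
  · by_cases hts : x k₀ ≤ t
    · rw [if_pos hts]
      have := hQle1 t
      rw [hQt] at this
      linarith
    · rw [if_neg hts]
      have := hQle0 t (le_of_not_ge hts)
      rw [hQt] at this
      linarith

end CMSKey

/-- With `P = ∑ pₙ Sₙ` the Chebyshev–Markov–Stieltjes majorant of `𝟙_{[x k₀,∞)}`
at the zero `x k₀` of the orthonormal polynomial `S n₀`, and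
`R` the Lagrange polynomial with `R(x k) = δ_{k k₀}` (so that
`0 ≤ P - 𝟙_{[x k₀,∞)} ≤ R²` pointwise), for each `1 ≤ n ≤ 2n₀-2` one has
`|pₙ| ≤ |∫_{[x k₀,∞)} Sₙ dσ| + ∫ R² |Sₙ| dσ`. -/
theorem cms_coeff_bound
    (σ : Measure ℝ) [IsProbabilityMeasure σ]
    (hmom : ∀ k : ℕ, Integrable (fun t => t ^ k) σ)
    (S : ℕ → Polynomial ℝ)
    (hdeg : ∀ n, (S n).degree = n)
    (horth : ∀ m n : ℕ, ∫ t, (S m).eval t * (S n).eval t ∂σ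
        = if m = n then 1 else 0)
    (n₀ : ℕ) (hn₀ : 1 ≤ n₀)
    (x : Fin n₀ → ℝ) (hx : StrictMono x)
    (hroot : ∀ k, (S n₀).eval (x k) = 0)
    (k₀ : Fin n₀)
    (P R : Polynomial ℝ) (p : ℕ → ℝ)
    (hPdeg : P.degree ≤ (2 * n₀ - 2 : ℕ))
    (hPval : ∀ k, P.eval (x k) = if k₀ ≤ k then 1 else 0)
    (hPder : ∀ k, k ≠ k₀ → (Polynomial.derivative P).eval (x k) = 0)
    (hRdeg : R.degree ≤ (n₀ - 1 : ℕ))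
    (hRval : ∀ k, R.eval (x k) = if k = k₀ then 1 else 0)
    (hPexp : P = ∑ n ∈ Finset.range (2 * n₀ - 1), Polynomial.C (p n) * S n)
    (n : ℕ) (hn : 1 ≤ n) (hn' : n ≤ 2 * n₀ - 2) :
    |p n| ≤ |∫ t in Set.Ici (x k₀), (S n).eval t ∂σ|
        + ∫ t, (R.eval t) ^ 2 * |(S n).eval t| ∂σ := by
  classical
  have key := cms_key n₀ hn₀ x hx k₀ P R hPdeg hPval hPder hRdeg hRval
  set c₀ := x k₀ with hc₀
  set ind : ℝ → ℝ := fun t => if c₀ ≤ t then 1 else 0 with hind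
  -- integrabilities
  have intS : Integrable (fun t => (S n).eval t) σ := cms_integrable_polyeval σ hmom _
  have intPS : Integrable (fun t => P.eval t * (S n).eval t) σ := by
    have h := cms_integrable_polyeval σ hmom (P * S n)
    simpa [eval_mul] using h
  have hindeq : (fun t => ind t * (S n).eval t)
      = (Set.Ici c₀).indicator (fun t => (S n).eval t) := by
    funext t
    simp only [hind, Set.indicator_apply, Set.mem_Ici]
    split_ifs <;> simp
  have intIndS : Integrable (fun t => ind t * (S n).eval t) σ := by
    rw [hindeq]
    exact intS.indicator measurableSet_Ici
  have intD : Integrable (fun t => (P.eval t - ind t) * (S n).eval t) σ := by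
    have h : (fun t => (P.eval t - ind t) * (S n).eval t)
        = fun t => P.eval t * (S n).eval t - ind t * (S n).eval t := by
      funext t; ring
    rw [h]
    exact intPS.sub intIndS
  have intR2S : Integrable (fun t => (R.eval t)^2 * |(S n).eval t|) σ := by
    have h : (fun t => (R.eval t)^2 * |(S n).eval t|)
        = fun t => |(R^2 * S n).eval t| := by
      funext t
      rw [eval_mul, eval_pow, abs_mul, abs_of_nonneg (sq_nonneg (R.eval t))]
    rw [h]
    exact (cms_integrable_polyeval σ hmom (R^2 * S n)).abs
  -- p n = ∫ P·Sₙ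
  have hips : ∫ t, P.eval t * (S n).eval t ∂σ = p n := by
    have h1 : ∀ t : ℝ, P.eval t * (S n).eval t
        = ∑ j ∈ Finset.range (2*n₀-1), p j * ((S j).eval t * (S n).eval t) := by
      intro t
      rw [hPexp, eval_finset_sum, Finset.sum_mul]
      refine Finset.sum_congr rfl (fun j _ => ?_)
      rw [eval_mul, eval_C]
      ring
    calc ∫ t, P.eval t * (S n).eval t ∂σ
        = ∫ t, ∑ j ∈ Finset.range (2*n₀-1), p j * ((S j).eval t * (S n).eval t) ∂σ := by
          congr 1
          funext t
          exact h1 t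
      _ = ∑ j ∈ Finset.range (2*n₀-1), ∫ t, p j * ((S j).eval t * (S n).eval t) ∂σ := by
          apply integral_finset_sum
          intro j _
          have h := (cms_integrable_polyeval σ hmom (S j * S n)).const_mul (p j)
          simpa [eval_mul] using h
      _ = ∑ j ∈ Finset.range (2*n₀-1), p j * ∫ t, (S j).eval t * (S n).eval t ∂σ := by
          refine Finset.sum_congr rfl (fun j _ => ?_)
          exact integral_const_mul _ _
      _ = ∑ j ∈ Finset.range (2*n₀-1), (if j = n then p j else 0) := by
          refine Finset.sum_congr rfl (fun j _ => ?_)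
          rw [horth j n]
          split_ifs <;> simp
      _ = p n := by
          rw [Finset.sum_ite_eq' (Finset.range (2*n₀-1)) n p,
            if_pos (Finset.mem_range.mpr (by omega))]
  -- decomposition
  have hsplit : p n = (∫ t, (P.eval t - ind t) * (S n).eval t ∂σ)
      + ∫ t in Set.Ici c₀, (S n).eval t ∂σ := by
    have h2 : ∫ t in Set.Ici c₀, (S n).eval t ∂σ = ∫ t, ind t * (S n).eval t ∂σ := by
      rw [← integral_indicator measurableSet_Ici, ← hindeq]
    rw [← hips, h2, ← integral_add intD intIndS]
    congr 1
    funext t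
    ring
  -- bound the error term
  have habs1 : |∫ t, (P.eval t - ind t) * (S n).eval t ∂σ|
      ≤ ∫ t, (R.eval t)^2 * |(S n).eval t| ∂σ := by
    refine le_trans ?_ (integral_mono intD.abs intR2S ?_)
    · have h := norm_integral_le_integral_norm
        (f := fun t => (P.eval t - ind t) * (S n).eval t) (μ := σ)
      simp only [Real.norm_eq_abs] at h
      exact h
    · intro t
      simp only [abs_mul]
      refine mul_le_mul_of_nonneg_right ?_ (abs_nonneg _)
      obtain ⟨hk1, hk2⟩ := key t
      rw [abs_le]
      constructor
      · have := sq_nonneg (R.eval t)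
        simp only [hind]
        linarith
      · simpa [hind] using hk2
  rw [hsplit]
  refine le_trans (abs_add_le _ _) ?_
  linarith [habs1]
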